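/- Let W be a real vector space, ω ∈ Λ²W* a 2-form and Ω ∈ ΛⁿW* an n-form with ω ∧ Ω = 0. Let L ⊆ W be a subspace on which both ω and Ω restrict to zero. Then for any vectors Y, Z ∈ W, the (n−1)-form identity (ι(Y)ω) ∧ (ι(Z)Ω) = (ι(Z)ω) ∧ (ι(Y)Ω) holds after restriction to L. -/

import Mathlib

open scoped TensorProduct

/-- The wedge product of two real-valued alternating forms. -/
noncomputable def wedge {W : Type*} [AddCommGroup W] [Module ℝ W] {a b : ℕ}
    (ω : W [⋀^Fin a]→ₗ[ℝ] ℝ) (η : W [⋀^Fin b]→ₗ[ℝ] ℝ) : W [⋀^Fin (a + b)]→ₗ[ℝ] ℝ :=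
  ((LinearMap.mul' ℝ ℝ).compAlternatingMap (ω.domCoprod η)).domDomCongr finSumFinEquiv

noncomputable def sgn {α : Type*} [DecidableEq α] [Fintype α] (σ : Equiv.Perm α) : ℝ :=
  ((Equiv.Perm.sign σ : ℤ) : ℝ)

section aux
variable {W : Type*} [AddCommGroup W] [Module ℝ W]

lemma wedge_eval {a b : ℕ} (α : W [⋀^Fin a]→ₗ[ℝ] ℝ) (β : W [⋀^Fin b]→ₗ[ℝ] ℝ)
    (y : Fin a ⊕ Fin b → W) :
    ((a.factorial * b.factorial : ℕ) : ℝ) • wedge α β (fun i => y (finSumFinEquiv.symm i)) =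
      ∑ σ : Equiv.Perm (Fin a ⊕ Fin b),
        sgn σ * (α (fun i => y (σ (.inl i))) * β (fun j => y (σ (.inr j)))) := by
  classical
  have h1 := MultilinearMap.domCoprod_alternization_eq (↑α) (↑β)
  rw [Fintype.card_fin, Fintype.card_fin] at h1
  have h2 : wedge α β (fun i => y (finSumFinEquiv.symm i)) =
      LinearMap.mul' ℝ ℝ (α.domCoprod β y) := by
    have hy : ((fun i => y (finSumFinEquiv.symm i)) ∘ ⇑finSumFinEquiv) = y := by
      funext i; simp
    simp only [wedge, AlternatingMap.domDomCongr_apply, LinearMap.compAlternatingMap_apply, hy]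
  rw [h2, Nat.cast_smul_eq_nsmul, ← map_nsmul, ← AlternatingMap.smul_apply, ← h1,
    MultilinearMap.alternatization_apply, map_sum]
  refine Finset.sum_congr rfl fun σ _ => ?_
  simp only [MultilinearMap.domDomCongr_apply, MultilinearMap.domCoprod_apply,
    AlternatingMap.coe_multilinearMap, Units.smul_def]
  rw [map_zsmul]
  simp only [LinearMap.mul'_apply, zsmul_eq_mul, sgn]

lemma vec2_eta {γ : Type*} (F : Fin 2 → γ) : F = ![F 0, F 1] := by
  funext i; fin_cases i <;> rfl

lemma vec1_eta {γ : Type*} (F : Fin 1 → γ) : F = ![F 0] := by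
  funext i; fin_cases i; rfl

lemma c2_inl0 (n : ℕ) : (finSumFinEquiv.trans (finCongr (by omega : 2+(n+1) = n+3)))
    (Sum.inl 0) = 0 := by
  apply Fin.ext; simp

lemma c2_inl1 (n : ℕ) : (finSumFinEquiv.trans (finCongr (by omega : 2+(n+1) = n+3)))
    (Sum.inl 1) = 1 := by
  apply Fin.ext; simp

lemma c2_inr (n : ℕ) (j : Fin (n+1)) :
    (finSumFinEquiv.trans (finCongr (by omega : 2+(n+1) = n+3))) (Sum.inr j) = j.succ.succ := by
  apply Fin.ext; simp [Fin.val_succ]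

lemma c1_inl0 (n : ℕ) : (finSumFinEquiv.trans (finCongr (by omega : 1+n = n+1)))
    (Sum.inl 0) = 0 := by
  apply Fin.ext; simp

lemma c1_inr (n : ℕ) (j : Fin n) :
    (finSumFinEquiv.trans (finCongr (by omega : 1+n = n+1))) (Sum.inr j) = j.succ := by
  apply Fin.ext; simp [Fin.val_succ]

lemma wedge2_eval (n : ℕ) (ω : W [⋀^Fin 2]→ₗ[ℝ] ℝ) (Ω : W [⋀^Fin (n+1)]→ₗ[ℝ] ℝ)
    (x : Fin (n+3) → W) :
    ((2 * (n+1).factorial : ℕ) : ℝ) •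
        wedge ω Ω (fun i => x (Fin.cast (by omega : 2+(n+1) = n+3) i)) =
      ∑ π : Equiv.Perm (Fin (n+3)),
        sgn π * (ω ![x (π 0), x (π 1)] * Ω (fun j => x (π j.succ.succ))) := by
  classical
  set c := finSumFinEquiv.trans (finCongr (by omega : 2+(n+1) = n+3)) with hc
  have h := wedge_eval ω Ω (fun i => x (c i))
  have harg : (fun i => (fun i' => x (c i')) (finSumFinEquiv.symm i)) =
      fun i : Fin (2+(n+1)) => x (Fin.cast (by omega : 2+(n+1) = n+3) i) := by
    funext i
    exact congrArg x (by apply Fin.ext; simp [hc])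
  rw [harg] at h
  have hfac : (2:ℕ).factorial * (n+1).factorial = 2 * (n+1).factorial := rfl
  rw [hfac] at h
  rw [h]
  refine Fintype.sum_equiv (Equiv.permCongr c) _ _ fun σ => ?_
  have h0 : Equiv.permCongr c σ 0 = c (σ (Sum.inl 0)) := by
    rw [← c2_inl0 n, Equiv.permCongr_apply, Equiv.symm_apply_apply]
  have h1 : Equiv.permCongr c σ 1 = c (σ (Sum.inl 1)) := by
    rw [← c2_inl1 n, Equiv.permCongr_apply, Equiv.symm_apply_apply]
  have hr : ∀ j : Fin (n+1), Equiv.permCongr c σ j.succ.succ = c (σ (Sum.inr j)) := by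
    intro j; rw [← c2_inr n j, Equiv.permCongr_apply, Equiv.symm_apply_apply]
  have hsgn : sgn (Equiv.permCongr c σ) = sgn σ := by
    simp [sgn, Equiv.Perm.sign_permCongr]
  rw [hsgn, h0, h1]
  simp only [hr]
  congr 1
  congr 1
  exact congrArg ω (vec2_eta fun i => x (c (σ (Sum.inl i))))

lemma wedge1_eval (n : ℕ) (α : W [⋀^Fin 1]→ₗ[ℝ] ℝ) (β : W [⋀^Fin n]→ₗ[ℝ] ℝ)
    (x : Fin (n+1) → W) :
    ((n.factorial : ℕ) : ℝ) •
        wedge α β (fun i => x (Fin.cast (by omega : 1+n = n+1) i)) =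
      ∑ τ : Equiv.Perm (Fin (n+1)),
        sgn τ * (α ![x (τ 0)] * β (fun j => x (τ j.succ))) := by
  classical
  set c := finSumFinEquiv.trans (finCongr (by omega : 1+n = n+1)) with hc
  have h := wedge_eval α β (fun i => x (c i))
  have harg : (fun i => (fun i' => x (c i')) (finSumFinEquiv.symm i)) =
      fun i : Fin (1+n) => x (Fin.cast (by omega : 1+n = n+1) i) := by
    funext i
    exact congrArg x (by apply Fin.ext; simp [hc])
  rw [harg] at h
  have hfac : (1:ℕ).factorial * n.factorial = n.factorial := by
    simp [Nat.factorial]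
  rw [hfac] at h
  rw [h]
  refine Fintype.sum_equiv (Equiv.permCongr c) _ _ fun σ => ?_
  have h0 : Equiv.permCongr c σ 0 = c (σ (Sum.inl 0)) := by
    rw [← c1_inl0 n, Equiv.permCongr_apply, Equiv.symm_apply_apply]
  have hr : ∀ j : Fin n, Equiv.permCongr c σ j.succ = c (σ (Sum.inr j)) := by
    intro j; rw [← c1_inr n j, Equiv.permCongr_apply, Equiv.symm_apply_apply]
  have hsgn : sgn (Equiv.permCongr c σ) = sgn σ := by
    simp [sgn, Equiv.Perm.sign_permCongr]
  rw [hsgn, h0]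
  simp only [hr]
  congr 1
  congr 1
  exact congrArg α (vec1_eta fun i => x (c (σ (Sum.inl i))))

lemma perm_sum_peel {N : ℕ} (f : Equiv.Perm (Fin (N+1)) → ℝ) :
    ∑ π : Equiv.Perm (Fin (N+1)), f π =
      ∑ p : Fin (N+1), ∑ e : Equiv.Perm (Fin N), f (Equiv.Perm.decomposeFin.symm (p, e)) := by
  rw [← Equiv.sum_comp Equiv.Perm.decomposeFin.symm f, Fintype.sum_prod_type]

lemma sgn_decomp {N : ℕ} (p : Fin (N+1)) (e : Equiv.Perm (Fin N)) :
    sgn (Equiv.Perm.decomposeFin.symm (p, e)) = (if p = 0 then (1:ℝ) else -1) * sgn e := by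
  rw [sgn, Equiv.Perm.decomposeFin.symm_sign]
  split_ifs <;> simp [sgn]

lemma sum_sign_comp {N : ℕ} (Θ : W [⋀^Fin N]→ₗ[ℝ] ℝ) (z : Fin N → W) :
    ∑ d : Equiv.Perm (Fin N), sgn d * Θ (z ∘ d) = (N.factorial : ℝ) * Θ z := by
  have h : ∀ d : Equiv.Perm (Fin N), sgn d * Θ (z ∘ d) = Θ z := by
    intro d
    rw [Θ.map_perm]
    rcases Int.units_eq_one_or (Equiv.Perm.sign d) with h | h <;> simp [sgn, h]
  rw [Finset.sum_congr rfl (fun d _ => h d), Finset.sum_const, Finset.card_univ, Fintype.card_perm,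
    Fintype.card_fin, nsmul_eq_mul]

lemma sum_sign_cons {N : ℕ} (Θ : W [⋀^Fin (N+1)]→ₗ[ℝ] ℝ) (B : W) (z : Fin N → W) :
    ∑ d : Equiv.Perm (Fin N), sgn d * Θ (Fin.cons B (z ∘ d)) =
      (N.factorial : ℝ) * Θ (Fin.cons B z) := by
  have h : ∀ d : Equiv.Perm (Fin N),
      Fin.cons B (z ∘ d) = (Fin.cons B z : Fin (N+1) → W) ∘ (Equiv.Perm.decomposeFin.symm (0, d)) := by
    intro d
    funext i
    refine Fin.cases ?_ (fun j => ?_) i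
    · simp
    · simp [Equiv.Perm.decomposeFin_symm_apply_succ, Equiv.swap_self]
  have h2 : ∀ d : Equiv.Perm (Fin N),
      sgn d * Θ (Fin.cons B (z ∘ d)) = Θ (Fin.cons B z) := by
    intro d
    rw [h d, Θ.map_perm, Equiv.Perm.decomposeFin.symm_sign]
    rcases Int.units_eq_one_or (Equiv.Perm.sign d) with hd | hd <;> simp [sgn, hd]
  rw [Finset.sum_congr rfl (fun d _ => h2 d), Finset.sum_const, Finset.card_univ, Fintype.card_perm,
    Fintype.card_fin, nsmul_eq_mul]

lemma swap_zero_succ_eval {N : ℕ} (y : Fin (N+1) → W) (r : Fin N) :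
    (fun j : Fin N => y (Equiv.swap 0 r.succ j.succ)) =
      Function.update (fun j : Fin N => y j.succ) r (y 0) := by
  funext j
  by_cases hj : j = r
  · subst hj
    rw [Equiv.swap_apply_right, Function.update_self]
  · rw [Equiv.swap_apply_of_ne_of_ne (Fin.succ_ne_zero j) (by simpa using hj),
      Function.update_of_ne hj]

lemma swap_zero_zero_eval {N : ℕ} (y : Fin (N+1) → W) :
    (fun j : Fin N => y (Equiv.swap 0 0 j.succ)) = fun j : Fin N => y j.succ := by
  funext j; rw [Equiv.swap_self]; rfl

lemma cons_swap_eq {N : ℕ} (x : Fin (N+1) → W) (p : Fin (N+1)) (B : W) :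
    Fin.cons B (fun j : Fin N => x (Equiv.swap 0 p j.succ)) =
      fun i => Function.update x p B (Equiv.swap 0 p i) := by
  funext i
  refine Fin.cases ?_ (fun j => ?_) i
  · rw [Fin.cons_zero, Equiv.swap_apply_left, Function.update_self]
  · rw [Fin.cons_succ]
    have hne : Equiv.swap 0 p j.succ ≠ p := by
      intro hcon
      have := (Equiv.swap 0 p).injective (a₁ := j.succ) (a₂ := (0 : Fin (N+1)))
        (by rw [hcon, Equiv.swap_apply_left])
      exact Fin.succ_ne_zero j this
    rw [Function.update_of_ne hne]

lemma omega_comm (ω : W [⋀^Fin 2]→ₗ[ℝ] ℝ) (A B : W) : ω ![B, A] = - ω ![A, B] := by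
  have h : (![A, B] ∘ (Equiv.swap 0 1) : Fin 2 → W) = ![B, A] := by
    funext i
    fin_cases i <;> simp [Equiv.swap_apply_def]
  rw [← h, AlternatingMap.map_swap _ _ (by decide)]

lemma sign_swap_zero {N : ℕ} (p : Fin (N+1)) :
    Equiv.Perm.sign (Equiv.swap (0 : Fin (N+1)) p) = if p = 0 then 1 else -1 := by
  split_ifs with h
  · subst h; rw [Equiv.swap_self]; simp
  · exact Equiv.Perm.sign_swap (Ne.symm h)

lemma curry_wedge_eval (n : ℕ) (ω : W [⋀^Fin 2]→ₗ[ℝ] ℝ) (Ω : W [⋀^Fin (n+1)]→ₗ[ℝ] ℝ)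
    (A B : W) (x : Fin (n+1) → W) :
    ((n.factorial : ℕ) : ℝ) • wedge (ω.curryLeft A) (Ω.curryLeft B)
        (fun i => x (Fin.cast (by omega : 1+n = n+1) i)) =
      (n.factorial : ℝ) * ∑ p : Fin (n+1), ω ![A, x p] * Ω (Function.update x p B) := by
  classical
  rw [wedge1_eval n (ω.curryLeft A) (Ω.curryLeft B) x, perm_sum_peel]
  have hstep : ∀ p : Fin (n+1),
      (∑ e : Equiv.Perm (Fin n),
        sgn (Equiv.Perm.decomposeFin.symm (p, e)) *
          ((ω.curryLeft A) ![x ((Equiv.Perm.decomposeFin.symm (p, e)) 0)] *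
           (Ω.curryLeft B) (fun j => x ((Equiv.Perm.decomposeFin.symm (p, e)) j.succ)))) =
      (n.factorial : ℝ) * (ω ![A, x p] * Ω (Function.update x p B)) := by
    intro p
    have key : ∀ e : Equiv.Perm (Fin n),
        sgn (Equiv.Perm.decomposeFin.symm (p, e)) *
          ((ω.curryLeft A) ![x ((Equiv.Perm.decomposeFin.symm (p, e)) 0)] *
           (Ω.curryLeft B) (fun j => x ((Equiv.Perm.decomposeFin.symm (p, e)) j.succ))) =
        ((if p = 0 then (1:ℝ) else -1) * ω ![A, x p]) *
          (sgn e * Ω (Fin.cons B ((fun j => x (Equiv.swap 0 p j.succ)) ∘ e))) := by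
      intro e
      rw [sgn_decomp, Equiv.Perm.decomposeFin_symm_apply_zero]
      simp only [Equiv.Perm.decomposeFin_symm_apply_succ]
      simp only [AlternatingMap.curryLeft_apply_apply]
      have hA : (ω (Matrix.vecCons A ![x p]) : ℝ) = ω ![A, x p] := rfl
      have hcomp : (Ω (Matrix.vecCons B (fun j => x (Equiv.swap 0 p ((e j).succ)))) : ℝ) =
          Ω (Fin.cons B ((fun j => x (Equiv.swap 0 p j.succ)) ∘ e)) := rfl
      rw [hA, hcomp]
      ring
    rw [Finset.sum_congr rfl (fun e _ => key e), ← Finset.mul_sum, sum_sign_cons, cons_swap_eq]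
    rw [show (fun i => Function.update x p B (Equiv.swap 0 p i)) =
        (Function.update x p B ∘ (Equiv.swap 0 p : Equiv.Perm (Fin (n+1)))) from rfl,
      AlternatingMap.map_perm, sign_swap_zero]
    split_ifs with hp <;> simp <;> ring
  rw [Finset.sum_congr rfl (fun p _ => hstep p), ← Finset.mul_sum]

lemma double_peel (n : ℕ) (ω : W [⋀^Fin 2]→ₗ[ℝ] ℝ) (Ω : W [⋀^Fin (n+1)]→ₗ[ℝ] ℝ)
    (w : Fin (n+3) → W) :
    ∑ π : Equiv.Perm (Fin (n+3)),
        sgn π * (ω ![w (π 0), w (π 1)] * Ω (fun j => w (π j.succ.succ))) =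
      ((n+1).factorial : ℝ) * ∑ p : Fin (n+3), ∑ q : Fin (n+2),
        (if p = 0 then (1:ℝ) else -1) * ((if q = 0 then (1:ℝ) else -1) *
          (ω ![w p, w (Equiv.swap 0 p q.succ)] *
           Ω (fun j => w (Equiv.swap 0 p (Equiv.swap 0 q j.succ).succ)))) := by
  classical
  rw [perm_sum_peel]
  rw [Finset.mul_sum]
  refine Finset.sum_congr rfl fun p _ => ?_
  calc
    (∑ e : Equiv.Perm (Fin (n+2)),
        sgn (Equiv.Perm.decomposeFin.symm (p, e)) *
          (ω ![w ((Equiv.Perm.decomposeFin.symm (p, e)) 0),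
               w ((Equiv.Perm.decomposeFin.symm (p, e)) 1)] *
           Ω (fun j => w ((Equiv.Perm.decomposeFin.symm (p, e)) j.succ.succ))))
      = ∑ e : Equiv.Perm (Fin (n+2)),
          (if p = 0 then (1:ℝ) else -1) *
            (sgn e * (ω ![w p, w (Equiv.swap 0 p (e 0).succ)] *
              Ω (fun j => w (Equiv.swap 0 p (e j.succ).succ)))) := by
        refine Finset.sum_congr rfl fun e _ => ?_
        rw [sgn_decomp, Equiv.Perm.decomposeFin_symm_apply_zero,
          Equiv.Perm.decomposeFin_symm_apply_one]
        simp only [Equiv.Perm.decomposeFin_symm_apply_succ]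
        ring
    _ = (if p = 0 then (1:ℝ) else -1) *
          ∑ e : Equiv.Perm (Fin (n+2)),
            sgn e * (ω ![w p, w (Equiv.swap 0 p (e 0).succ)] *
              Ω (fun j => w (Equiv.swap 0 p (e j.succ).succ))) := by
        rw [Finset.mul_sum]
    _ = (if p = 0 then (1:ℝ) else -1) *
          ∑ q : Fin (n+2), ∑ d : Equiv.Perm (Fin (n+1)),
            sgn (Equiv.Perm.decomposeFin.symm (q, d)) *
              (ω ![w p, w (Equiv.swap 0 p ((Equiv.Perm.decomposeFin.symm (q, d)) 0).succ)] *
               Ω (fun j => w (Equiv.swap 0 p ((Equiv.Perm.decomposeFin.symm (q, d)) j.succ).succ))) := by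
        rw [perm_sum_peel]
    _ = (if p = 0 then (1:ℝ) else -1) *
          ∑ q : Fin (n+2),
            ((if q = 0 then (1:ℝ) else -1) * (ω ![w p, w (Equiv.swap 0 p q.succ)])) *
              (((n+1).factorial : ℝ) *
                Ω (fun j => w (Equiv.swap 0 p (Equiv.swap 0 q j.succ).succ))) := by
        congr 1
        refine Finset.sum_congr rfl fun q _ => ?_
        calc
          (∑ d : Equiv.Perm (Fin (n+1)),
              sgn (Equiv.Perm.decomposeFin.symm (q, d)) *
                (ω ![w p, w (Equiv.swap 0 p ((Equiv.Perm.decomposeFin.symm (q, d)) 0).succ)] *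
                 Ω (fun j => w (Equiv.swap 0 p ((Equiv.Perm.decomposeFin.symm (q, d)) j.succ).succ))))
            = ∑ d : Equiv.Perm (Fin (n+1)),
                ((if q = 0 then (1:ℝ) else -1) * (ω ![w p, w (Equiv.swap 0 p q.succ)])) *
                  (sgn d * Ω ((fun j : Fin (n+1) =>
                    w (Equiv.swap 0 p (Equiv.swap 0 q j.succ).succ)) ∘ d)) := by
              refine Finset.sum_congr rfl fun d _ => ?_
              rw [sgn_decomp, Equiv.Perm.decomposeFin_symm_apply_zero]
              simp only [Equiv.Perm.decomposeFin_symm_apply_succ]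
              have hcomp : (Ω (fun j => w (Equiv.swap 0 p (Equiv.swap 0 q (d j).succ).succ)) : ℝ) =
                  Ω ((fun j : Fin (n+1) =>
                    w (Equiv.swap 0 p (Equiv.swap 0 q j.succ).succ)) ∘ d) := rfl
              rw [hcomp]
              ring
          _ = ((if q = 0 then (1:ℝ) else -1) * (ω ![w p, w (Equiv.swap 0 p q.succ)])) *
                (((n+1).factorial : ℝ) *
                  Ω (fun j => w (Equiv.swap 0 p (Equiv.swap 0 q j.succ).succ))) := by
              rw [← Finset.mul_sum, sum_sign_comp]
    _ = ((n+1).factorial : ℝ) * ∑ q : Fin (n+2),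
          (if p = 0 then (1:ℝ) else -1) * ((if q = 0 then (1:ℝ) else -1) *
            (ω ![w p, w (Equiv.swap 0 p q.succ)] *
             Ω (fun j => w (Equiv.swap 0 p (Equiv.swap 0 q j.succ).succ)))) := by
        rw [Finset.mul_sum, Finset.mul_sum]
        refine Finset.sum_congr rfl fun q _ => ?_
        ring

lemma qsum_eval (n : ℕ) (ω : W [⋀^Fin 2]→ₗ[ℝ] ℝ) (Ω : W [⋀^Fin (n+1)]→ₗ[ℝ] ℝ)
    (v : W) (y : Fin (n+2) → W) :
    ∑ q : Fin (n+2), (if q = 0 then (1:ℝ) else -1) *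
        (ω ![v, y q] * Ω (fun j => y (Equiv.swap 0 q j.succ))) =
      ω ![v, y 0] * Ω (fun j => y j.succ) -
        ∑ t : Fin (n+1), ω ![v, y t.succ] *
          Ω (Function.update (fun j : Fin (n+1) => y j.succ) t (y 0)) := by
  classical
  have h0 : (fun j : Fin (n+1) => y (Equiv.swap 0 (0:Fin (n+2)) j.succ)) =
      fun j : Fin (n+1) => y j.succ := by
    funext j; rw [Equiv.swap_self, Equiv.refl_apply]
  have ht : ∀ t : Fin (n+1), (if (t.succ : Fin (n+2)) = 0 then (1:ℝ) else -1) *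
      (ω ![v, y t.succ] * Ω (fun j => y (Equiv.swap 0 t.succ j.succ))) =
      -(ω ![v, y t.succ] * Ω (Function.update (fun j : Fin (n+1) => y j.succ) t (y 0))) := by
    intro t
    rw [if_neg (Fin.succ_ne_zero t), swap_zero_succ_eval]
    ring
  have h00 : (if (0:Fin (n+2)) = 0 then (1:ℝ) else -1) *
      (ω ![v, y 0] * Ω (fun j => y (Equiv.swap 0 (0:Fin (n+2)) j.succ))) =
      ω ![v, y 0] * Ω (fun j => y j.succ) := by
    rw [if_pos rfl, one_mul, h0]
  rw [Fin.sum_univ_succ]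
  exact (congrArg₂ (· + ·) h00
    ((Finset.sum_congr rfl fun t _ => ht t).trans (Finset.sum_neg_distrib _))).trans (by ring)

lemma key_identity (n : ℕ) (ω : W [⋀^Fin 2]→ₗ[ℝ] ℝ) (Ω : W [⋀^Fin (n+1)]→ₗ[ℝ] ℝ)
    (hωΩ : wedge ω Ω = 0) (Y Z : W) (ℓ : Fin (n+1) → W)
    (hΩℓ : Ω ℓ = 0) (hωℓ : ∀ s t : Fin (n+1), ω ![ℓ s, ℓ t] = 0) :
    ∑ s : Fin (n+1), ω ![Y, ℓ s] * Ω (Function.update ℓ s Z) =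
      ∑ s : Fin (n+1), ω ![Z, ℓ s] * Ω (Function.update ℓ s Y) := by
  classical
  set u : Fin (n+3) → W := Fin.cons Y (Fin.cons Z ℓ) with hu
  have hu0 : u 0 = Y := rfl
  have husucc : ∀ r : Fin (n+2), u r.succ = (Fin.cons Z ℓ : Fin (n+2) → W) r := by
    intro r; simp [hu]
  have htail : (fun j : Fin (n+2) => u j.succ) = (Fin.cons Z ℓ : Fin (n+2) → W) := funext husucc
  have hF0 : ∀ i : Fin (n+2), u (Equiv.swap 0 (0:Fin (n+3)) i.succ) = (Fin.cons Z ℓ : Fin (n+2) → W) i := by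
    intro i; rw [Equiv.swap_self, Equiv.refl_apply]; exact husucc i
  have hF1 : ∀ r i : Fin (n+2), u (Equiv.swap 0 r.succ i.succ) =
      Function.update (Fin.cons Z ℓ : Fin (n+2) → W) r Y i := by
    intro r i
    rw [congrFun (swap_zero_succ_eval u r) i, htail, hu0]
  -- the total double sum vanishes
  have hev := wedge2_eval n ω Ω u
  rw [hωΩ, double_peel] at hev
  simp only [AlternatingMap.zero_apply, smul_zero] at hev
  have hzero : ∑ p : Fin (n+3), ∑ q : Fin (n+2),
      (if p = 0 then (1:ℝ) else -1) * ((if q = 0 then (1:ℝ) else -1) *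
        (ω ![u p, u (Equiv.swap 0 p q.succ)] *
         Ω (fun j => u (Equiv.swap 0 p (Equiv.swap 0 q j.succ).succ)))) = 0 := by
    have h := hev.symm
    rcases mul_eq_zero.mp h with h' | h'
    · exact absurd h' (Nat.cast_ne_zero.2 (Nat.factorial_ne_zero _))
    · exact h'
  -- case p = 0
  have hP0 : ∑ q : Fin (n+2),
      (if (0:Fin (n+3)) = 0 then (1:ℝ) else -1) * ((if q = 0 then (1:ℝ) else -1) *
        (ω ![u 0, u (Equiv.swap 0 (0:Fin (n+3)) q.succ)] *
         Ω (fun j => u (Equiv.swap 0 (0:Fin (n+3)) (Equiv.swap 0 q j.succ).succ)))) =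
      - ∑ s : Fin (n+1), ω ![Y, ℓ s] * Ω (Function.update ℓ s Z) := by
    have hc : ∀ q : Fin (n+2),
        (if (0:Fin (n+3)) = 0 then (1:ℝ) else -1) * ((if q = 0 then (1:ℝ) else -1) *
          (ω ![u 0, u (Equiv.swap 0 (0:Fin (n+3)) q.succ)] *
           Ω (fun j => u (Equiv.swap 0 (0:Fin (n+3)) (Equiv.swap 0 q j.succ).succ)))) =
        (if q = 0 then (1:ℝ) else -1) *
          (ω ![Y, (Fin.cons Z ℓ : Fin (n+2) → W) q] * Ω (fun j => (Fin.cons Z ℓ : Fin (n+2) → W) (Equiv.swap 0 q j.succ))) := by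
      intro q
      rw [if_pos rfl, one_mul, hu0, hF0 q,
        show (fun j : Fin (n+1) =>
            u (Equiv.swap 0 (0:Fin (n+3)) (Equiv.swap 0 q j.succ).succ)) =
          (fun j : Fin (n+1) => (Fin.cons Z ℓ : Fin (n+2) → W) (Equiv.swap 0 q j.succ)) from
          funext fun j => hF0 _]
    refine ((Finset.sum_congr rfl fun q _ => hc q).trans (qsum_eval n ω Ω Y _)).trans ?_
    simp only [Fin.cons_zero, Fin.cons_succ, hΩℓ, mul_zero, zero_sub]
  -- case p = 1
  have hP1 : ∑ q : Fin (n+2),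
      (if (Fin.succ (0:Fin (n+2)) : Fin (n+3)) = 0 then (1:ℝ) else -1) *
        ((if q = 0 then (1:ℝ) else -1) *
        (ω ![u (Fin.succ (0:Fin (n+2))), u (Equiv.swap 0 (Fin.succ (0:Fin (n+2))) q.succ)] *
         Ω (fun j => u (Equiv.swap 0 (Fin.succ (0:Fin (n+2)))
              (Equiv.swap 0 q j.succ).succ)))) =
      ∑ s : Fin (n+1), ω ![Z, ℓ s] * Ω (Function.update ℓ s Y) := by
    have hy : ∀ i : Fin (n+2), u (Equiv.swap 0 (Fin.succ (0:Fin (n+2))) i.succ) =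
        (Fin.cons Y ℓ : Fin (n+2) → W) i := by
      intro i; rw [hF1 0 i, Fin.update_cons_zero]
    have hv : u (Fin.succ (0:Fin (n+2))) = Z := by
      rw [husucc]; rfl
    have hc : ∀ q : Fin (n+2),
        (if (Fin.succ (0:Fin (n+2)) : Fin (n+3)) = 0 then (1:ℝ) else -1) *
          ((if q = 0 then (1:ℝ) else -1) *
          (ω ![u (Fin.succ (0:Fin (n+2))), u (Equiv.swap 0 (Fin.succ (0:Fin (n+2))) q.succ)] *
           Ω (fun j => u (Equiv.swap 0 (Fin.succ (0:Fin (n+2)))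
                (Equiv.swap 0 q j.succ).succ)))) =
        -((if q = 0 then (1:ℝ) else -1) *
          (ω ![Z, (Fin.cons Y ℓ : Fin (n+2) → W) q] * Ω (fun j => (Fin.cons Y ℓ : Fin (n+2) → W) (Equiv.swap 0 q j.succ)))) := by
      intro q
      rw [if_neg (Fin.succ_ne_zero _), hv, hy q,
        show (fun j : Fin (n+1) => u (Equiv.swap 0 (Fin.succ (0:Fin (n+2)))
            (Equiv.swap 0 q j.succ).succ)) =
          (fun j : Fin (n+1) => (Fin.cons Y ℓ : Fin (n+2) → W) (Equiv.swap 0 q j.succ)) from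
          funext fun j => hy _]
      ring
    refine ((Finset.sum_congr rfl fun q _ => hc q).trans ?_)
    rw [Finset.sum_neg_distrib, qsum_eval n ω Ω Z (Fin.cons Y ℓ)]
    simp only [Fin.cons_zero, Fin.cons_succ, hΩℓ, mul_zero, zero_sub, neg_neg]
  -- case p = s.succ.succ
  have hPs : ∀ s : Fin (n+1), ∑ q : Fin (n+2),
      (if (Fin.succ (Fin.succ s) : Fin (n+3)) = 0 then (1:ℝ) else -1) *
        ((if q = 0 then (1:ℝ) else -1) *
        (ω ![u (Fin.succ (Fin.succ s)), u (Equiv.swap 0 (Fin.succ (Fin.succ s)) q.succ)] *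
         Ω (fun j => u (Equiv.swap 0 (Fin.succ (Fin.succ s))
              (Equiv.swap 0 q j.succ).succ)))) =
      ω ![Z, ℓ s] * Ω (Function.update ℓ s Y) -
        ω ![Y, ℓ s] * Ω (Function.update ℓ s Z) := by
    intro s
    have hy : ∀ i : Fin (n+2), u (Equiv.swap 0 (Fin.succ (Fin.succ s)) i.succ) =
        (Fin.cons Z (Function.update ℓ s Y) : Fin (n+2) → W) i := by
      intro i; rw [hF1 s.succ i, ← Fin.cons_update]
    have hv : u (Fin.succ (Fin.succ s)) = ℓ s := by
      rw [husucc]; exact Fin.cons_succ _ _ _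
    have hc : ∀ q : Fin (n+2),
        (if (Fin.succ (Fin.succ s) : Fin (n+3)) = 0 then (1:ℝ) else -1) *
          ((if q = 0 then (1:ℝ) else -1) *
          (ω ![u (Fin.succ (Fin.succ s)), u (Equiv.swap 0 (Fin.succ (Fin.succ s)) q.succ)] *
           Ω (fun j => u (Equiv.swap 0 (Fin.succ (Fin.succ s))
                (Equiv.swap 0 q j.succ).succ)))) =
        -((if q = 0 then (1:ℝ) else -1) *
          (ω ![ℓ s, (Fin.cons Z (Function.update ℓ s Y) : Fin (n+2) → W) q] *
           Ω (fun j => (Fin.cons Z (Function.update ℓ s Y) : Fin (n+2) → W) (Equiv.swap 0 q j.succ)))) := by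
      intro q
      rw [if_neg (Fin.succ_ne_zero _), hv, hy q,
        show (fun j : Fin (n+1) => u (Equiv.swap 0 (Fin.succ (Fin.succ s))
            (Equiv.swap 0 q j.succ).succ)) =
          (fun j : Fin (n+1) =>
            (Fin.cons Z (Function.update ℓ s Y) : Fin (n+2) → W) (Equiv.swap 0 q j.succ)) from
          funext fun j => hy _]
      ring
    refine ((Finset.sum_congr rfl fun q _ => hc q).trans ?_)
    rw [Finset.sum_neg_distrib, qsum_eval n ω Ω (ℓ s) (Fin.cons Z (Function.update ℓ s Y))]
    simp only [Fin.cons_zero, Fin.cons_succ]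
    have hinner : ∑ t : Fin (n+1),
        ω ![ℓ s, Function.update ℓ s Y t] *
          Ω (Function.update (Function.update ℓ s Y) t Z) =
        ω ![ℓ s, Y] * Ω (Function.update ℓ s Z) := by
      refine Finset.sum_eq_single_of_mem s (Finset.mem_univ s) ?_ |>.trans ?_
      · intro t _ hts
        rw [Function.update_of_ne hts, hωℓ s t, zero_mul]
      · rw [Function.update_self, Function.update_idem]
    rw [hinner, omega_comm ω Z (ℓ s), omega_comm ω Y (ℓ s)]
    ring
  -- assemble
  have total : ∑ p : Fin (n+3), ∑ q : Fin (n+2),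
      (if p = 0 then (1:ℝ) else -1) * ((if q = 0 then (1:ℝ) else -1) *
        (ω ![u p, u (Equiv.swap 0 p q.succ)] *
         Ω (fun j => u (Equiv.swap 0 p (Equiv.swap 0 q j.succ).succ)))) =
      (- ∑ s : Fin (n+1), ω ![Y, ℓ s] * Ω (Function.update ℓ s Z)) +
        ((∑ s : Fin (n+1), ω ![Z, ℓ s] * Ω (Function.update ℓ s Y)) +
          ∑ s : Fin (n+1), (ω ![Z, ℓ s] * Ω (Function.update ℓ s Y) -
            ω ![Y, ℓ s] * Ω (Function.update ℓ s Z))) := by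
    rw [Fin.sum_univ_succ]
    refine congrArg₂ (· + ·) hP0 ?_
    rw [Fin.sum_univ_succ]
    exact congrArg₂ (· + ·) hP1 (Finset.sum_congr rfl fun s _ => hPs s)
  rw [total, Finset.sum_sub_distrib] at hzero
  linarith

end aux

/-- Let `W` be a real vector space, `ω` a 2-form and `Ω` an `n`-form
(`n = "n'+1"`) with `ω ∧ Ω = 0`. Let `L ⊆ W` be a subspace on which both `ω` and `Ω`
restrict to zero. Then for any vectors `Y, Z ∈ W` the identity
`(ι(Y)ω) ∧ (ι(Z)Ω) = (ι(Z)ω) ∧ (ι(Y)Ω)` holds after restriction to `L`. -/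
theorem statement7 (W : Type*) [AddCommGroup W] [Module ℝ W] (n : ℕ)
    (ω : W [⋀^Fin 2]→ₗ[ℝ] ℝ) (Ω : W [⋀^Fin (n + 1)]→ₗ[ℝ] ℝ)
    (hωΩ : wedge ω Ω = 0)
    (L : Submodule ℝ W)
    (hω : ω.compLinearMap L.subtype = 0)
    (hΩ : Ω.compLinearMap L.subtype = 0)
    (Y Z : W) :
    (wedge (ω.curryLeft Y) (Ω.curryLeft Z)).compLinearMap L.subtype =
    (wedge (ω.curryLeft Z) (Ω.curryLeft Y)).compLinearMap L.subtype := by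
  classical
  ext v
  simp only [AlternatingMap.compLinearMap_apply]
  set x : Fin (n+1) → W := fun j => (v (Fin.cast (by omega : n+1 = 1+n) j) : W) with hx
  have hcast : ∀ i : Fin (1+n),
      Fin.cast (by omega : n+1 = 1+n) (Fin.cast (by omega : 1+n = n+1) i) = i :=
    fun i => Fin.ext rfl
  have hxv : (fun i : Fin (1+n) => (L.subtype (v i) : W)) =
      fun i => x (Fin.cast (by omega : 1+n = n+1) i) := by
    funext i
    simp [hx, hcast i]
  have hΩx : Ω x = 0 := by
    have h : (Ω.compLinearMap L.subtype) (fun j => v (Fin.cast (by omega : n+1 = 1+n) j)) = 0 := by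
      rw [hΩ]; rfl
    simpa [AlternatingMap.compLinearMap_apply, hx] using h
  have hωx : ∀ s t : Fin (n+1), ω ![x s, x t] = 0 := by
    intro s t
    have h : (ω.compLinearMap L.subtype)
        ![v (Fin.cast (by omega : n+1 = 1+n) s), v (Fin.cast (by omega : n+1 = 1+n) t)] = 0 := by
      rw [hω]; rfl
    rw [AlternatingMap.compLinearMap_apply] at h
    have harg : (fun i => (L.subtype
        (![v (Fin.cast (by omega : n+1 = 1+n) s), v (Fin.cast (by omega : n+1 = 1+n) t)] i) : W)) =
        ![x s, x t] := by
      funext i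
      fin_cases i <;> rfl
    rwa [harg] at h
  have hkey := key_identity n ω Ω hωΩ Y Z x hΩx hωx
  have h1 := curry_wedge_eval n ω Ω Y Z x
  have h2 := curry_wedge_eval n ω Ω Z Y x
  rw [hkey] at h1
  have h3 := h1.trans h2.symm
  rw [hxv]
  have hne : (n.factorial : ℝ) ≠ 0 := Nat.cast_ne_zero.2 (Nat.factorial_ne_zero n)
  rw [smul_eq_mul, smul_eq_mul] at h3
  exact mul_left_cancel₀ hne h3
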